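/- Let H be a connected graph with Perron eigenvector x of its adjacency matrix, and let u, v be two non-adjacent vertices of H with N_H(u) ≠ N_H(v). If Σ_{w ∈ N_H(v)} x_w ≥ Σ_{w ∈ N_H(u)} x_w, then ρ(Z_{u,v}(H)) > ρ(H), where Z_{u,v}(H) is the Zykov symmetrization of H obtained by deleting all edges incident to u and adding all edges from u to the vertices of N_H(v). -/

import Mathlib

open SimpleGraph Matrix

/-- The adjacency matrix of a simple graph, over `ℝ`. -/
noncomputable def adjMat {V : Type*} (G : SimpleGraph V) : Matrix V V ℝ :=
  fun a b => by classical exact if G.Adj a b then 1 else 0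

/-- The spectral radius of a graph: the largest (real) eigenvalue of its adjacency
matrix, expressed as the supremum of the real spectrum. -/
noncomputable def specRad {V : Type*} [Fintype V] [DecidableEq V] (G : SimpleGraph V) : ℝ :=
  sSup (spectrum ℝ (adjMat G))

/-- A linear forest: an acyclic graph in which every vertex has degree at most 2,
i.e. every connected component is a path. -/
def IsLinearForest {V : Type*} (H : SimpleGraph V) : Prop :=
  H.IsAcyclic ∧ ∀ v, {w | H.Adj v w}.ncard ≤ 2

/-- `G` contains some member of `𝓛 s`, the family of linear forests with `s` edges. -/
def ContainsLinForest {V : Type*} (G : SimpleGraph V) (s : ℕ) : Prop :=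
  ∃ H : SimpleGraph V, H ≤ G ∧ IsLinearForest H ∧ H.edgeSet.ncard = s

/-- `G` belongs to `Ex_sp(n, {K_{k+1}, 𝓛_s})`: it is `{K_{k+1}, 𝓛_s}`-free and has the
maximum spectral radius among all such graphs on `n` vertices. -/
def IsExtremal (n k s : ℕ) (G : SimpleGraph (Fin n)) : Prop :=
  G.CliqueFree (k + 1) ∧ ¬ ContainsLinForest G s ∧
    ∀ H : SimpleGraph (Fin n), H.CliqueFree (k + 1) → ¬ ContainsLinForest H s →
      specRad H ≤ specRad G

/-- The degree of `v` in `G`. -/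
noncomputable def degOf {V : Type*} (G : SimpleGraph V) (v : V) : ℕ :=
  {w | G.Adj v w}.ncard

/-- The Zykov symmetrization `Z_{u,v}(H)`: delete all edges incident to `u` and join `u`
to every vertex of `N_H(v)`. -/
def zykov {V : Type*} (H : SimpleGraph V) (u v : V) : SimpleGraph V where
  Adj a b := (a ≠ u ∧ b ≠ u ∧ H.Adj a b) ∨ (a = u ∧ b ≠ u ∧ H.Adj v b) ∨
    (b = u ∧ a ≠ u ∧ H.Adj v a)
  symm := by
    refine ⟨?_⟩
    rintro a b (⟨h1, h2, h3⟩ | ⟨h1, h2, h3⟩ | ⟨h1, h2, h3⟩)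
    · exact Or.inl ⟨h2, h1, h3.symm⟩
    · exact Or.inr (Or.inr ⟨h1, h2, h3⟩)
    · exact Or.inr (Or.inl ⟨h1, h2, h3⟩)
  loopless := by
    refine ⟨?_⟩
    rintro a (⟨h1, h2, h3⟩ | ⟨h1, h2, h3⟩ | ⟨h1, h2, h3⟩)
    · exact H.irrefl h3
    · exact h2 h1
    · exact h2 h1

/-- Li–Peng: if `H` is connected with Perron vector `x`, and `u, v` are non-adjacent
vertices with distinct neighborhoods such that `∑_{w ∈ N(v)} x_w ≥ ∑_{w ∈ N(u)} x_w`,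
then the Zykov symmetrization strictly increases the spectral radius. Here
`(adjMat H *ᵥ x) u = ∑_{w ∈ N_H(u)} x_w`. -/
lemma adjMat_apply {V : Type*} (G : SimpleGraph V) (a b : V) [Decidable (G.Adj a b)] :
    adjMat G a b = if G.Adj a b then 1 else 0 := by
  by_cases h : G.Adj a b <;> simp [adjMat, h]

lemma adjMat_isHermitian {V : Type*} [Fintype V] (G : SimpleGraph V) :
    (adjMat G).IsHermitian := by
  classical
  rw [Matrix.IsHermitian, conjTranspose_eq_transpose_of_trivial]
  ext a b
  simp only [transpose_apply, adjMat_apply]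
  by_cases h : G.Adj a b
  · simp [h, h.symm]
  · rw [if_neg h, if_neg (fun h' => h h'.symm)]

lemma rayleigh_bound {V : Type*} [Fintype V] [DecidableEq V] (B : Matrix V V ℝ)
    (hB : B.IsHermitian) (c : ℝ) (hc : ∀ i, hB.eigenvalues i ≤ c) (x : V → ℝ) :
    x ⬝ᵥ (B *ᵥ x) ≤ c * (x ⬝ᵥ x) ∧
      (x ⬝ᵥ (B *ᵥ x) = c * (x ⬝ᵥ x) → B *ᵥ x = c • x) := by
  classical
  set U : Matrix V V ℝ := (hB.eigenvectorUnitary : Matrix V V ℝ) with hU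
  set lam : V → ℝ := hB.eigenvalues with hlam
  have hspec : B = U * diagonal lam * star U := by
    have := hB.spectral_theorem
    rwa [RCLike.ofReal_real_eq_id, Function.id_comp] at this
  have hUstar : U * star U = 1 := (Matrix.mem_unitaryGroup_iff).mp hB.eigenvectorUnitary.2
  have hstarT : star U = Uᵀ := conjTranspose_eq_transpose_of_trivial U
  set y : V → ℝ := star U *ᵥ x with hy
  have hxU : x ᵥ* U = y := by rw [hy, hstarT, mulVec_transpose]
  have hUy : U *ᵥ y = x := by
    rw [hy, mulVec_mulVec, hUstar, one_mulVec]
  have hBx : B *ᵥ x = U *ᵥ (diagonal lam *ᵥ y) := by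
    rw [hspec, ← mulVec_mulVec, ← mulVec_mulVec, hy]
  have hxBx : x ⬝ᵥ (B *ᵥ x) = ∑ i, lam i * (y i)^2 := by
    rw [hBx, dotProduct_mulVec, hxU]
    simp only [dotProduct, mulVec_diagonal]
    exact Finset.sum_congr rfl fun i _ => by ring
  have hyy : x ⬝ᵥ x = ∑ i, (y i)^2 := by
    have : y ⬝ᵥ y = (x ᵥ* U) ⬝ᵥ y := by rw [hxU]
    rw [← dotProduct_mulVec, hUy] at this
    rw [← this]
    simp only [dotProduct]
    exact Finset.sum_congr rfl fun i _ => by ring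
  have hkey : c * (x ⬝ᵥ x) - x ⬝ᵥ (B *ᵥ x) = ∑ i, (c - lam i) * (y i)^2 := by
    rw [hxBx, hyy, Finset.mul_sum, ← Finset.sum_sub_distrib]
    exact Finset.sum_congr rfl fun i _ => by ring
  have hterm : ∀ i ∈ Finset.univ, 0 ≤ (c - lam i) * (y i)^2 := fun i _ =>
    mul_nonneg (by linarith [hc i]) (sq_nonneg _)
  constructor
  · nlinarith [Finset.sum_nonneg hterm, hkey]
  · intro heq
    have hzero : ∑ i, (c - lam i) * (y i)^2 = 0 := by rw [← hkey, heq]; ring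
    have hall := (Finset.sum_eq_zero_iff_of_nonneg hterm).mp hzero
    have hDy : diagonal lam *ᵥ y = c • y := by
      funext i
      rw [mulVec_diagonal]
      have := hall i (Finset.mem_univ i)
      by_cases hyi : y i = 0
      · simp [hyi]
      · have : c - lam i = 0 := by
          rcases mul_eq_zero.mp this with h | h
          · exact h
          · exact absurd (pow_eq_zero_iff (by norm_num) |>.mp h) hyi
        have hceq : lam i = c := by linarith
        simp [hceq, Pi.smul_apply, smul_eq_mul, mul_comm]
    rw [hBx, hDy, mulVec_smul, hUy]

theorem zykov_increases_spectral_radius {V : Type*} [Fintype V] [DecidableEq V]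
    (H : SimpleGraph V) (hconn : H.Connected)
    (x : V → ℝ) (hxpos : ∀ w, 0 < x w) (heig : adjMat H *ᵥ x = specRad H • x)
    (u v : V) (huv : u ≠ v) (hnadj : ¬ H.Adj u v)
    (hN : H.neighborSet u ≠ H.neighborSet v)
    (hsum : (adjMat H *ᵥ x) u ≤ (adjMat H *ᵥ x) v) :
    specRad H < specRad (zykov H u v) := by
  classical
  set A : Matrix V V ℝ := adjMat H with hA
  set B : Matrix V V ℝ := adjMat (zykov H u v) with hB
  set ρ : ℝ := specRad H with hρ
  set μ : ℝ := specRad (zykov H u v) with hμ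
  have hBH : B.IsHermitian := adjMat_isHermitian _
  set d : V → ℝ := fun b => (if H.Adj v b then (1:ℝ) else 0) - (if H.Adj u b then 1 else 0)
    with hd
  -- the basic matrix identity
  have hBA : ∀ a b, B a b = A a b + ((if a = u then d b else 0) + (if b = u then d a else 0)) := by
    intro a b
    rw [hB, hA, adjMat_apply, adjMat_apply]
    have hvu : ¬ H.Adj v u := fun h => hnadj h.symm
    have hdu : d u = 0 := by simp [hd, hvu, (H.irrefl : ¬ H.Adj u u)]
    by_cases ha : a = u <;> by_cases hb : b = u
    · simp only [ha, hb, if_pos rfl, hdu]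
      rw [if_neg ((zykov H u v).irrefl : ¬ (zykov H u v).Adj u u), if_neg (H.irrefl : ¬ H.Adj u u)]
      simp
    · have hzu : (zykov H u v).Adj u b ↔ H.Adj v b := by simp [zykov, hb]
      simp only [ha, if_pos rfl, if_neg hb, hd]
      by_cases h1 : H.Adj v b <;> by_cases h2 : H.Adj u b <;>
        simp [hzu, h1, h2] <;> ring
    · have hzu : (zykov H u v).Adj a u ↔ H.Adj v a := by simp [zykov, ha]
      simp only [hb, if_pos rfl, if_neg ha, hd]
      have h3 : H.Adj a u ↔ H.Adj u a := H.adj_comm a u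
      by_cases h1 : H.Adj v a <;> by_cases h2 : H.Adj u a <;>
        simp [hzu, h1, h2, h3] <;> ring
    · have hzu : (zykov H u v).Adj a b ↔ H.Adj a b := by simp [zykov, ha, hb]
      simp [hzu, ha, hb]
  have hdx : d ⬝ᵥ x = (A *ᵥ x) v - (A *ᵥ x) u := by
    simp only [dotProduct, hd, mulVec, hA, adjMat_apply, sub_mul, Finset.sum_sub_distrib]
  have hdx_nonneg : 0 ≤ d ⬝ᵥ x := by rw [hdx]; linarith [hsum]
  -- mulVec formula
  have hBx : ∀ a, (B *ᵥ x) a = (A *ᵥ x) a + ((if a = u then d ⬝ᵥ x else 0) + d a * x u) := by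
    intro a
    simp only [mulVec, dotProduct]
    calc ∑ b, B a b * x b
        = ∑ b, (A a b * x b + ((if a = u then d b * x b else 0)
            + (if b = u then d a * x b else 0))) := by
          refine Finset.sum_congr rfl fun b _ => ?_
          rw [hBA a b]
          by_cases ha : a = u <;> by_cases hb : b = u <;> simp [ha, hb] <;> ring
      _ = (∑ b, A a b * x b) + ((if a = u then ∑ b, d b * x b else 0) + d a * x u) := by
          rw [Finset.sum_add_distrib, Finset.sum_add_distrib]
          congr 1
          congr 1
          · by_cases ha : a = u <;> simp [ha]
          · rw [Finset.sum_ite_eq' Finset.univ u (fun b => d a * x b)]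
            simp
  -- dot product formula
  have hdot : x ⬝ᵥ (B *ᵥ x) = x ⬝ᵥ (A *ᵥ x) + 2 * x u * (d ⬝ᵥ x) := by
    simp only [dotProduct]
    calc ∑ a, x a * (B *ᵥ x) a
        = ∑ a, (x a * (A *ᵥ x) a + ((if a = u then x a * (d ⬝ᵥ x) else 0)
            + x a * d a * x u)) := by
          refine Finset.sum_congr rfl fun a _ => ?_
          rw [hBx a]
          by_cases ha : a = u <;> simp [ha] <;> ring
      _ = (∑ a, x a * (A *ᵥ x) a) + (x u * (d ⬝ᵥ x) + (∑ a, d a * x a) * x u) := by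
          rw [Finset.sum_add_distrib, Finset.sum_add_distrib]
          congr 1
          congr 1
          · rw [Finset.sum_ite_eq' Finset.univ u (fun a => x a * (d ⬝ᵥ x))]
            simp
          · rw [Finset.sum_mul]
            exact Finset.sum_congr rfl fun a _ => by ring
      _ = (∑ a, x a * (A *ᵥ x) a) + 2 * x u * (d ⬝ᵥ x) := by
          simp only [dotProduct]; ring
  have hxx_pos : 0 < x ⬝ᵥ x := by
    have : Nonempty V := hconn.nonempty
    exact Finset.sum_pos (fun i _ => mul_pos (hxpos i) (hxpos i)) Finset.univ_nonempty
  have hρR : x ⬝ᵥ (A *ᵥ x) = ρ * (x ⬝ᵥ x) := by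
    rw [heig, dotProduct_smul, smul_eq_mul]
  -- eigenvalue bound for B
  have hcle : ∀ i, hBH.eigenvalues i ≤ μ := fun i =>
    le_csSup (Matrix.finite_real_spectrum.bddAbove) (hBH.eigenvalues_mem_spectrum_real i)
  obtain ⟨hray1, hray2⟩ := rayleigh_bound B hBH μ hcle x
  by_contra hlt
  push_neg at hlt
  have h2 : ρ * (x ⬝ᵥ x) ≤ x ⬝ᵥ (B *ᵥ x) := by
    rw [← hρR, hdot]
    nlinarith [hxpos u, hdx_nonneg]
  have hρμ : ρ ≤ μ := by
    have := h2.trans hray1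
    exact le_of_mul_le_mul_right (by linarith) hxx_pos
  have hμρ : μ = ρ := le_antisymm hlt hρμ
  have heq : x ⬝ᵥ (B *ᵥ x) = μ * (x ⬝ᵥ x) := le_antisymm hray1 (by rw [hμρ]; exact h2)
  have hBxe : B *ᵥ x = A *ᵥ x := by
    rw [hray2 heq, hμρ]
    exact heig.symm
  -- contradiction at a vertex in the symmetric difference
  have hex : ∃ w, ¬(H.Adj u w ↔ H.Adj v w) := by
    by_contra h
    push_neg at h
    exact hN (Set.ext fun w => by
      rw [SimpleGraph.mem_neighborSet, SimpleGraph.mem_neighborSet]; exact h w)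
  obtain ⟨w, hw⟩ := hex
  have hwu : w ≠ u := by
    intro hwu'
    apply hw
    rw [hwu']
    exact ⟨fun h => absurd h (H.irrefl : ¬ H.Adj u u), fun h => absurd h.symm hnadj⟩
  have hweq := congrFun hBxe w
  rw [hBx w, if_neg hwu] at hweq
  have hdw : d w * x u = 0 := by linarith
  have hdw0 : d w = 0 := by
    rcases mul_eq_zero.mp hdw with h | h
    · exact h
    · exact absurd h (ne_of_gt (hxpos u))
  rw [hd] at hdw0
  by_cases h1 : H.Adj u w <;> by_cases h2 : H.Adj v w <;>
    simp [h1, h2] at hdw0 hw
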